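/- Let n ≥ 2 and 1 ≤ i ≤ n−1 be integers, d = gcd(i,n), r = n/d. Let a₁ ≥ a₂ ≥ ⋯ ≥ a_d be integers and let μ ∈ ℤⁿ be the vector in which each a_k is repeated r consecutive times. Then there is no i-twisted Newton vector ν with ν ≠ μ, P̃_ν(n) = P̃_μ(n), P̃_ν(j) ≤ P̃_μ(j) for all 1 ≤ j ≤ n−1, and 𝐢(ν,μ) + 𝐛₁(ν,μ) = 0. (This is Proposition 4.9 of the paper: for the Tits datum (A_{n−1}, Ad(τ_i), {μ}) with i ≠ 0 and [b_{μ,max}] μ-ordinary — which forces μ to have the stated r-block form — there is no σ-conjugacy class [b] < [b_{μ,max}] with Ess-gap([b],[b_{μ,max}]) = 0.) -/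

import Mathlib

/-- Shifted partial sum `P̃_ν(j) = ν₁ + ⋯ + ν_j + j·i/n` (0-indexed entries). -/
def newtonPT (n i : ℕ) (ν : ℕ → ℚ) (j : ℕ) : ℚ :=
  (∑ k ∈ Finset.range j, ν k) + (j : ℚ) * (i : ℚ) / (n : ℚ)

/-- A rational number is an integer. -/
def IsIntQ (q : ℚ) : Prop := ∃ m : ℤ, (m : ℚ) = q

/-- `ν` is an `i`-twisted Newton vector (of length `n`): weakly decreasing, integral shifted
total sum, and integral shifted partial sum at every breakpoint. -/
def IsTwNewton (n i : ℕ) (ν : ℕ → ℚ) : Prop :=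
  (∀ k, k + 1 < n → ν (k + 1) ≤ ν k) ∧
  IsIntQ (newtonPT n i ν n) ∧
  ∀ j, 1 ≤ j → j ≤ n - 1 → ν (j - 1) ≠ ν j → IsIntQ (newtonPT n i ν j)

/-- `𝐢(ν,ν')`: the number of lattice points strictly between the two shifted Newton polygons. -/
noncomputable def nIT (n i : ℕ) (ν ν' : ℕ → ℚ) : ℕ :=
  Set.ncard {p : ℕ × ℤ | 1 ≤ p.1 ∧ p.1 ≤ n - 1 ∧
    newtonPT n i ν p.1 < (p.2 : ℚ) ∧ (p.2 : ℚ) < newtonPT n i ν' p.1}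

/-- `𝐛₁(ν,ν')`: lattice points on the lower shifted polygon not lying on the upper one. -/
noncomputable def nB1T (n i : ℕ) (ν ν' : ℕ → ℚ) : ℕ :=
  Set.ncard {j : ℕ | 1 ≤ j ∧ j ≤ n - 1 ∧ IsIntQ (newtonPT n i ν j) ∧
    newtonPT n i ν j < newtonPT n i ν' j}

/-- `𝐛₂(ν,ν')`: lattice points on the upper shifted polygon not lying on the lower one. -/
noncomputable def nB2T (n i : ℕ) (ν ν' : ℕ → ℚ) : ℕ :=
  Set.ncard {j : ℕ | 1 ≤ j ∧ j ≤ n - 1 ∧ IsIntQ (newtonPT n i ν' j) ∧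
    newtonPT n i ν j < newtonPT n i ν' j}

private lemma b1T_empty {n i : ℕ} {ν μ : ℕ → ℚ} (h : nB1T n i ν μ = 0) {j : ℕ}
    (h1 : 1 ≤ j) (h2 : j ≤ n - 1) (h3 : IsIntQ (newtonPT n i ν j))
    (h4 : newtonPT n i ν j < newtonPT n i μ j) : False := by
  have hfin : {j : ℕ | 1 ≤ j ∧ j ≤ n - 1 ∧ IsIntQ (newtonPT n i ν j) ∧
      newtonPT n i ν j < newtonPT n i μ j}.Finite :=
    (Set.finite_Icc 1 (n-1)).subset fun x hx => Set.mem_Icc.mpr ⟨hx.1, hx.2.1⟩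
  have he := (Set.ncard_eq_zero hfin).mp h
  have hj : j ∈ {j : ℕ | 1 ≤ j ∧ j ≤ n - 1 ∧ IsIntQ (newtonPT n i ν j) ∧
      newtonPT n i ν j < newtonPT n i μ j} := ⟨h1, h2, h3, h4⟩
  rw [he] at hj
  exact hj

private lemma iT_empty {n i : ℕ} {ν μ : ℕ → ℚ} (h : nIT n i ν μ = 0) {j : ℕ} {m : ℤ}
    (h1 : 1 ≤ j) (h2 : j ≤ n - 1) (h3 : newtonPT n i ν j < (m : ℚ))
    (h4 : (m : ℚ) < newtonPT n i μ j) : False := by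
  have hfin : {p : ℕ × ℤ | 1 ≤ p.1 ∧ p.1 ≤ n - 1 ∧ newtonPT n i ν p.1 < (p.2 : ℚ) ∧
      (p.2 : ℚ) < newtonPT n i μ p.1}.Finite := by
    apply Set.Finite.subset (Set.Finite.biUnion (Set.finite_Icc 1 (n-1))
      (fun k (_ : k ∈ Set.Icc 1 (n-1)) => Set.Finite.prod (Set.finite_singleton k)
        (Set.finite_Icc (⌈newtonPT n i ν k⌉) (⌊newtonPT n i μ k⌋))))
    rintro ⟨x, y⟩ ⟨hx1, hx2, hy1, hy2⟩
    exact Set.mem_biUnion (Set.mem_Icc.mpr ⟨hx1, hx2⟩)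
      (Set.mem_prod.mpr ⟨rfl, Set.mem_Icc.mpr ⟨Int.ceil_le.mpr hy1.le, Int.le_floor.mpr hy2.le⟩⟩)
  have he := (Set.ncard_eq_zero hfin).mp h
  have hj : (j, m) ∈ {p : ℕ × ℤ | 1 ≤ p.1 ∧ p.1 ≤ n - 1 ∧ newtonPT n i ν p.1 < (p.2 : ℚ) ∧
      (p.2 : ℚ) < newtonPT n i μ p.1} := ⟨h1, h2, h3, h4⟩
  rw [he] at hj
  exact hj

/-- Proposition 4.9: let `n ≥ 2`, `1 ≤ i ≤ n−1`, `d = gcd(i,n)`,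
`r = n/d`, and let `μ ∈ ℤⁿ` consist of `d` blocks of length `r` with weakly decreasing
integer values `a₀ ≥ a₁ ≥ ⋯ ≥ a_{d−1}`. Then there is no `i`-twisted Newton vector
`ν ≠ μ` with `ν ≤ μ` (for the shifted partial sums) and `𝐢(ν,μ) + 𝐛₁(ν,μ) = 0`,
i.e. no `[b] < [b_{μ,max}]` with `Ess-gap([b],[b_{μ,max}]) = 0`. -/
theorem no_essGap_zero_below_mu_twisted (n i : ℕ) (hn : 2 ≤ n) (hi1 : 1 ≤ i)
    (hi2 : i ≤ n - 1) (d r : ℕ) (hd : d = Nat.gcd i n) (hr : r = n / d)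
    (a : ℕ → ℤ) (ha : ∀ k, k + 1 < d → a (k + 1) ≤ a k)
    (μ : ℕ → ℚ) (hμ : ∀ k, k < n → μ k = ((a (k / r) : ℤ) : ℚ)) :
    ¬ ∃ ν : ℕ → ℚ, IsTwNewton n i ν ∧ (∃ k, k < n ∧ ν k ≠ μ k) ∧
        newtonPT n i ν n = newtonPT n i μ n ∧
        (∀ j, 1 ≤ j → j ≤ n - 1 → newtonPT n i ν j ≤ newtonPT n i μ j) ∧
        nIT n i ν μ + nB1T n i ν μ = 0 := by
  rintro ⟨ν, ⟨-, -, hbreak⟩, ⟨k₀, hk₀n, hk₀⟩, hsum, hle, hzero⟩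
  have hIT : nIT n i ν μ = 0 := Nat.eq_zero_of_add_eq_zero_right hzero
  have hB1 : nB1T n i ν μ = 0 := Nat.eq_zero_of_add_eq_zero_left hzero
  -- basic arithmetic facts
  have hn0 : 0 < n := by omega
  have hd0 : 0 < d := by rw [hd]; exact Nat.gcd_pos_of_pos_right i hn0
  have hdn : d ∣ n := hd ▸ Nat.gcd_dvd_right i n
  have hdi : d ∣ i := hd ▸ Nat.gcd_dvd_left i n
  have hnrd : n = r * d := by rw [hr, Nat.div_mul_cancel hdn]
  have hird : i = (i / d) * d := (Nat.div_mul_cancel hdi).symm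
  have hcop : Nat.Coprime r (i / d) := by
    have := Nat.coprime_div_gcd_div_gcd (m := i) (n := n) (by rw [← hd]; exact hd0)
    rw [← hd] at this
    rw [← hr] at this
    exact this.symm
  obtain ⟨i', hi'd⟩ : ∃ i', i = i' * d := ⟨i / d, hird⟩
  have hi'div : i / d = i' := by rw [hi'd]; exact Nat.mul_div_cancel _ hd0
  rw [hi'div] at hcop
  have hr0 : 0 < r := by
    rcases Nat.eq_zero_or_pos r with h | h
    · rw [h] at hnrd; omega
    · exact h
  have hr2 : 2 ≤ r := by
    by_contra h
    have hr1 : r = 1 := by omega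
    have : n = d := by rw [hnrd, hr1, one_mul]
    have : n ∣ i := by rw [this]; exact hdi
    have := Nat.le_of_dvd (by omega) this
    omega
  have hdQ : (d : ℚ) ≠ 0 := by positivity
  have hrQ : (0 : ℚ) < r := by exact_mod_cast hr0
  have hnQ : (n : ℚ) ≠ 0 := by positivity
  have hiQ : (i : ℚ) = (i' : ℚ) * (d : ℚ) := by exact_mod_cast congrArg (Nat.cast (R := ℚ)) hi'd
  have hnQ' : (n : ℚ) = (r : ℚ) * (d : ℚ) := by exact_mod_cast congrArg (Nat.cast (R := ℚ)) hnrd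
  -- μ partial sums are integers plus j·i'/r
  have hSμ : ∀ j, j ≤ n → (∑ k ∈ Finset.range j, μ k)
      = ((∑ k ∈ Finset.range j, a (k / r) : ℤ) : ℚ) := by
    intro j hj
    rw [Int.cast_sum]
    exact Finset.sum_congr rfl fun k hk => hμ k (lt_of_lt_of_le (Finset.mem_range.mp hk) hj)
  have hPμ_eq : ∀ j, j ≤ n → newtonPT n i μ j
      = ((∑ k ∈ Finset.range j, a (k / r) : ℤ) : ℚ) + ((j * i' : ℕ) : ℚ) / r := by
    intro j hj
    rw [newtonPT, hSμ j hj]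
    congr 1
    rw [div_eq_div_iff hnQ (ne_of_gt hrQ)]
    push_cast
    rw [hiQ, hnQ']
    ring
  have hPμdvd : ∀ j, j ≤ n → IsIntQ (newtonPT n i μ j) → r ∣ j := by
    rintro j hj ⟨m, hm⟩
    rw [hPμ_eq j hj] at hm
    have hq0 : ((j * i' : ℕ) : ℚ) / r = (m : ℚ) - ((∑ k ∈ Finset.range j, a (k / r) : ℤ) : ℚ) := by
      rw [hm]; ring
    have hq : ((j * i' : ℕ) : ℚ) = ((m - ∑ k ∈ Finset.range j, a (k / r) : ℤ) : ℚ) * r := by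
      rw [← div_mul_cancel₀ ((j * i' : ℕ) : ℚ) (ne_of_gt hrQ), hq0]
      push_cast
      ring
    have hz' : (((j * i' : ℕ) : ℤ) : ℚ)
        = (((m - ∑ k ∈ Finset.range j, a (k / r)) * (r : ℤ) : ℤ) : ℚ) := by
      push_cast at hq ⊢
      linear_combination hq
    have hz : ((j * i' : ℕ) : ℤ) = (m - ∑ k ∈ Finset.range j, a (k / r)) * (r : ℤ) :=
      Int.cast_injective hz'
    have : (r : ℤ) ∣ ((j * i' : ℕ) : ℤ) :=
      ⟨m - ∑ k ∈ Finset.range j, a (k / r), by rw [hz]; ring⟩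
    have : r ∣ j * i' := by exact_mod_cast this
    exact hcop.dvd_of_dvd_mul_right this
  -- P̃_μ(r·t) is an integer
  have hPμZ : ∀ t, t ≤ d → ∃ M : ℤ, (M : ℚ) = newtonPT n i μ (r * t) := by
    intro t ht
    have hrt : r * t ≤ n := by rw [hnrd]; exact Nat.mul_le_mul (le_refl r) ht
    refine ⟨(∑ k ∈ Finset.range (r * t), a (k / r)) + t * i', ?_⟩
    rw [hPμ_eq _ hrt]
    push_cast
    field_simp
  -- the combined emptiness: no integer m with P̃_ν(j) ≤ m < P̃_μ(j)
  have key : ∀ j, 1 ≤ j → j < n → ∀ m : ℤ,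
      newtonPT n i ν j ≤ (m : ℚ) → (m : ℚ) < newtonPT n i μ j → False := by
    intro j h1 h2 m hm1 hm2
    rcases lt_or_eq_of_le hm1 with h | h
    · exact iT_empty hIT h1 (by omega) h hm2
    · exact b1T_empty hB1 h1 (by omega) ⟨m, h.symm⟩ (by rw [h]; exact hm2)
  have key2 : ∀ j, 1 ≤ j → j < n → IsIntQ (newtonPT n i ν j) →
      newtonPT n i ν j = newtonPT n i μ j := by
    rintro j h1 h2 ⟨m, hm⟩
    rcases eq_or_lt_of_le (hle j h1 (by omega)) with h | h
    · exact h
    · exact absurd (key j h1 h2 m hm.ge (hm ▸ h)) (fun hh => hh)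
  -- ν has no break at j unless r ∣ j
  have hblock : ∀ j, 1 ≤ j → j < n → ¬ r ∣ j → ν (j - 1) = ν j := by
    intro j h1 h2 hndvd
    by_contra hne
    have hint : IsIntQ (newtonPT n i ν j) := hbreak j h1 (by omega) hne
    have heq := key2 j h1 h2 hint
    rw [heq] at hint
    exact hndvd (hPμdvd j (by omega) hint)
  -- ν is constant on each block
  have hrtn : ∀ t, t < d → r * t + r ≤ n := by
    intro t ht
    calc r * t + r = r * (t + 1) := by ring
    _ ≤ r * d := Nat.mul_le_mul (le_refl r) (by omega)
    _ = n := hnrd.symm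
  have hconst : ∀ t, t < d → ∀ x, x < r → ν (r * t + x) = ν (r * t) := by
    intro t ht x
    induction x with
    | zero => intro _; rfl
    | succ x ih =>
      intro hx
      have hxr : x < r := by omega
      have hj2 : r * t + (x + 1) < n := by have := hrtn t ht; omega
      have hmod : (r * t + (x + 1)) % r = x + 1 := by
        rw [Nat.mul_add_mod]
        exact Nat.mod_eq_of_lt hx
      have hndvd : ¬ r ∣ (r * t + (x + 1)) := by
        intro hdvd
        rw [Nat.dvd_iff_mod_eq_zero] at hdvd
        omega
      have := hblock (r * t + (x + 1)) (by omega) hj2 hndvd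
      have hsub : r * t + (x + 1) - 1 = r * t + x := by omega
      rw [hsub] at this
      rw [show r * t + (x + 1) = r * t + x + 1 by ring] at *
      rw [← this]
      exact ih hxr
  -- block gaps D t
  set D : ℕ → ℚ := fun t => newtonPT n i μ (r * t) - newtonPT n i ν (r * t) with hDdef
  have hD0 : D 0 = 0 := by simp [hDdef, newtonPT]
  have hDd : D d = 0 := by
    simp only [hDdef, ← hnrd]
    rw [hsum]; ring
  have hDbounds : ∀ t, t ≤ d → 0 ≤ D t ∧ D t < 1 := by
    intro t ht
    rcases Nat.eq_zero_or_pos t with h0 | h1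
    · rw [h0, hD0]; norm_num
    rcases eq_or_lt_of_le ht with hd' | htd
    · rw [hd', hDd]; norm_num
    have hrt1 : 1 ≤ r * t := Nat.one_le_iff_ne_zero.mpr (by positivity)
    have hrtn' : r * t < n := by
      calc r * t < r * t + r := by omega
      _ ≤ n := hrtn t htd
    constructor
    · have := hle (r * t) hrt1 (by omega)
      simp [hDdef]; linarith
    · obtain ⟨M, hM⟩ := hPμZ t ht
      by_contra hge
      push_neg at hge
      refine key (r * t) hrt1 hrtn' (M - 1) ?_ ?_
      · push_cast
        rw [hM]
        simp only [hDdef] at hge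
        linarith
      · push_cast
        rw [hM]
        linarith
  -- step formula
  have hstep : ∀ (f : ℕ → ℚ) (t : ℕ), newtonPT n i f (r * (t + 1))
      = newtonPT n i f (r * t) + (∑ x ∈ Finset.range r, f (r * t + x)) + (r : ℚ) * i / n := by
    intro f t
    rw [newtonPT, newtonPT, show r * (t + 1) = r * t + r by ring, Finset.sum_range_add]
    push_cast
    ring
  have hDdiff : ∀ t, t < d → D (t + 1) = D t + (r : ℚ) * ((a t : ℚ) - ν (r * t)) := by
    intro t ht
    have hμsum : (∑ x ∈ Finset.range r, μ (r * t + x)) = (r : ℚ) * (a t : ℚ) := by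
      rw [Finset.sum_congr rfl (fun x hx => by
        have hxr := Finset.mem_range.mp hx
        have hlt : r * t + x < n := by have := hrtn t ht; omega
        have hdiv : (r * t + x) / r = t := by
          rw [Nat.mul_add_div hr0]
          simp [Nat.div_eq_of_lt hxr]
        rw [hμ _ hlt, hdiv])]
      rw [Finset.sum_const, Finset.card_range, nsmul_eq_mul]
    have hνsum : (∑ x ∈ Finset.range r, ν (r * t + x)) = (r : ℚ) * ν (r * t) := by
      rw [Finset.sum_congr rfl (fun x hx => hconst t ht x (Finset.mem_range.mp hx))]
      rw [Finset.sum_const, Finset.card_range, nsmul_eq_mul]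
    simp only [hDdef]
    rw [hstep μ t, hstep ν t, hμsum, hνsum]
    ring
  -- all D t = 0
  have hDall : ∀ t, t ≤ d → D t = 0 := by
    by_contra hc
    push_neg at hc
    obtain ⟨ts, htsd, hDts⟩ := hc
    have hts1 : 1 ≤ ts := by
      rcases Nat.eq_zero_or_pos ts with h | h
      · rw [h] at hDts; exact absurd hD0 hDts
      · exact h
    have htsd' : ts < d := by
      rcases eq_or_lt_of_le htsd with h | h
      · rw [h] at hDts; exact absurd hDd hDts
      · exact h
    -- no break at interior boundaries where D ≠ 0
    have hebound : ∀ t, t < d → -1 < (r : ℚ) * ((a t : ℚ) - ν (r * t)) ∧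
        (r : ℚ) * ((a t : ℚ) - ν (r * t)) < 1 := by
      intro t ht
      have h1 := hDbounds t (by omega)
      have h2 := hDbounds (t + 1) (by omega)
      have := hDdiff t ht
      constructor <;> linarith
    have hestep : ∀ t, 1 ≤ t → t < d → D t ≠ 0 →
        ((a t : ℚ) - ν (r * t)) = ((a (t - 1) : ℚ) - ν (r * (t - 1))) := by
      intro t h1 h2 hDt
      -- ν has no break at boundary r·t
      have hrt1 : 1 ≤ r * t := Nat.one_le_iff_ne_zero.mpr (by positivity)
      have hrtn' : r * t < n := by
        calc r * t < r * t + r := by omega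
        _ ≤ n := hrtn t h2
      have hcν : ν (r * t - 1) = ν (r * t) := by
        by_contra hne
        have hint : IsIntQ (newtonPT n i ν (r * t)) := hbreak (r * t) hrt1 (by omega) hne
        have := key2 (r * t) hrt1 hrtn' hint
        apply hDt
        simp only [hDdef]
        rw [this]; ring
      have hprev : ν (r * t - 1) = ν (r * (t - 1)) := by
        obtain ⟨t', rfl⟩ : ∃ t', t = t' + 1 := ⟨t - 1, by omega⟩
        have h3 : t' < d := by omega
        have := hconst t' h3 (r - 1) (by omega)
        have hidx : r * t' + (r - 1) = r * (t' + 1) - 1 := by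
          have h4 : r * (t' + 1) = r * t' + r := by ring
          omega
        rw [hidx] at this
        simp only [Nat.add_sub_cancel]
        exact this
      have hcc : ν (r * (t - 1)) = ν (r * t) := by rw [← hprev, hcν]
      -- then a t = a (t-1)
      have hbl := hebound t h2
      have hbl' := hebound (t - 1) (by omega)
      have hale : a t ≤ a (t - 1) := by
        have := ha (t - 1) (by omega)
        rwa [show t - 1 + 1 = t by omega] at this
      have haeq : a t = a (t - 1) := by
        by_contra hane
        have h4 : a t + 1 ≤ a (t - 1) := by omega
        have h4Q : (a t : ℚ) + 1 ≤ (a (t - 1) : ℚ) := by exact_mod_cast h4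
        rw [hcc] at hbl'
        have hr2Q : (2 : ℚ) ≤ r := by exact_mod_cast hr2
        nlinarith [hbl.1, hbl'.2]
      rw [haeq, hcc]
    -- t₁ : last zero before ts
    set t₁ := Nat.findGreatest (fun t => D t = 0) ts with ht₁def
    have hZt₁ : D t₁ = 0 := by
      rcases Nat.eq_zero_or_pos t₁ with h | h
      · rw [h]; exact hD0
      · exact Nat.findGreatest_of_ne_zero ht₁def.symm (by omega)
    have ht₁le : t₁ ≤ ts := Nat.findGreatest_le ts
    have ht₁lt : t₁ < ts := by
      rcases eq_or_lt_of_le ht₁le with h | h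
      · exact absurd (h ▸ hZt₁) hDts
      · exact h
    have ht₁gr : ∀ v, t₁ < v → v ≤ ts → ¬ D v = 0 :=
      fun v hv1 hv2 => Nat.findGreatest_is_greatest hv1 hv2
    -- t₂ : first zero after ts
    have hex : ∃ u, ts < u ∧ u ≤ d ∧ D u = 0 := ⟨d, htsd', le_refl d, hDd⟩
    set t₂ := Nat.find hex with ht₂def
    obtain ⟨ht₂gt, ht₂le, hZt₂⟩ := Nat.find_spec hex
    have ht₂min : ∀ v, v < t₂ → ts < v → D v ≠ 0 := by
      intro v hv1 hv2 hZv
      exact Nat.find_min hex hv1 ⟨hv2, by omega, hZv⟩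
    have hnz : ∀ v, t₁ < v → v < t₂ → D v ≠ 0 := by
      intro v hv1 hv2
      rcases le_or_gt v ts with h | h
      · exact ht₁gr v hv1 h
      · exact ht₂min v hv2 h
    -- e is constant on [t₁, t₂)
    have heconst : ∀ m, t₁ + m < t₂ →
        ((a (t₁ + m) : ℚ) - ν (r * (t₁ + m))) = ((a t₁ : ℚ) - ν (r * t₁)) := by
      intro m
      induction m with
      | zero => intro _; rfl
      | succ m ih =>
        intro h
        have hv1 : 1 ≤ t₁ + m + 1 := by omega
        have hvd : t₁ + m + 1 < d := by omega
        have hnzv : D (t₁ + m + 1) ≠ 0 := hnz (t₁ + m + 1) (by omega) (by omega)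
        have := hestep (t₁ + m + 1) hv1 hvd hnzv
        rw [show t₁ + m + 1 - 1 = t₁ + m by omega] at this
        rw [show t₁ + (m + 1) = t₁ + m + 1 by ring, this]
        exact ih (by omega)
    -- linear growth of D
    have hDlin : ∀ m, t₁ + m ≤ t₂ → D (t₁ + m) = (m : ℚ) * ((r : ℚ) * ((a t₁ : ℚ) - ν (r * t₁))) := by
      intro m
      induction m with
      | zero => intro _; simpa using hZt₁
      | succ m ih =>
        intro h
        have h1 : t₁ + m < d := by omega
        have := hDdiff (t₁ + m) h1
        rw [heconst m (by omega)] at this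
        rw [show t₁ + (m + 1) = t₁ + m + 1 by ring, this, ih (by omega)]
        push_cast
        ring
    have hfin := hDlin (t₂ - t₁) (by omega)
    rw [show t₁ + (t₂ - t₁) = t₂ by omega, hZt₂] at hfin
    have htdQ : ((t₂ - t₁ : ℕ) : ℚ) ≠ 0 := by
      have : 0 < t₂ - t₁ := by omega
      positivity
    have hzero' : (r : ℚ) * ((a t₁ : ℚ) - ν (r * t₁)) = 0 := by
      rcases mul_eq_zero.mp hfin.symm with h | h
      · exact absurd h htdQ
      · exact h
    have hD1 := hDlin 1 (by omega)
    rw [hzero'] at hD1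
    simp at hD1
    exact hnz (t₁ + 1) (by omega) (by omega) hD1
  -- conclude ν = μ
  have hνa : ∀ t, t < d → ν (r * t) = (a t : ℚ) := by
    intro t ht
    have h1 := hDall t (by omega)
    have h2 := hDall (t + 1) (by omega)
    have := hDdiff t ht
    rw [h1, h2] at this
    have : (r : ℚ) * ((a t : ℚ) - ν (r * t)) = 0 := by linarith
    rcases mul_eq_zero.mp this with h | h
    · exact absurd h (by positivity)
    · linarith
  have : ν k₀ = μ k₀ := by
    have hdivlt : k₀ / r < d := by
      rw [Nat.div_lt_iff_lt_mul hr0]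
      have h' : d * r = n := by rw [hnrd, Nat.mul_comm]
      omega
    have hmod : k₀ % r < r := Nat.mod_lt _ hr0
    have hk : r * (k₀ / r) + k₀ % r = k₀ := Nat.div_add_mod k₀ r
    have := hconst (k₀ / r) hdivlt (k₀ % r) hmod
    rw [hk] at this
    rw [this, hνa _ hdivlt, hμ k₀ hk₀n]
  exact hk₀ this
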